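/- For d = 0, the minimal-time function of the reduced problem equals V₀(x) = r·T(x₁) + (1-r)·T(x₂) for all x ∈ ℝ₊², where T(σ) = max(0, ∫_{s̲}^{σ} dξ/γ(ξ)). -/

import Mathlib

open Set MeasureTheory intervalIntegral

namespace S16

variable {μ γ : ℝ → ℝ}

lemma mu_nonneg (hmono : StrictMonoOn μ (Set.Ici 0)) (h0 : μ 0 = 0) {s : ℝ} (hs : 0 ≤ s) :
    0 ≤ μ s := by
  rcases eq_or_lt_of_le hs with h | h
  · simp [← h, h0]
  · have := hmono (le_refl (0:ℝ)) (le_of_lt h) h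
    linarith [h0 ▸ this]

lemma gamma_ub (hγ : ∀ σ > (0:ℝ), IsGreatest ((fun s : ℝ => μ s * (σ - s)) '' Set.Icc 0 σ) (γ σ))
    {σ : ℝ} (hσ : 0 < σ) {s : ℝ} (hs : s ∈ Set.Icc 0 σ) : μ s * (σ - s) ≤ γ σ :=
  (hγ σ hσ).2 ⟨s, hs, rfl⟩

lemma gamma_mem (hγ : ∀ σ > (0:ℝ), IsGreatest ((fun s : ℝ => μ s * (σ - s)) '' Set.Icc 0 σ) (γ σ))
    {σ : ℝ} (hσ : 0 < σ) : ∃ s ∈ Set.Icc 0 σ, μ s * (σ - s) = γ σ := by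
  rcases (hγ σ hσ).1 with ⟨s, hs, h⟩
  exact ⟨s, hs, h⟩

lemma gamma_pos (hmono : StrictMonoOn μ (Set.Ici 0)) (h0 : μ 0 = 0)
    (hγ : ∀ σ > (0:ℝ), IsGreatest ((fun s : ℝ => μ s * (σ - s)) '' Set.Icc 0 σ) (γ σ))
    {σ : ℝ} (hσ : 0 < σ) : 0 < γ σ := by
  have h1 : μ (σ/2) * (σ - σ/2) ≤ γ σ := gamma_ub hγ hσ ⟨by linarith, by linarith⟩
  have h2 : 0 < μ (σ/2) := by
    have := hmono (le_refl (0:ℝ)) (by linarith : (0:ℝ) ≤ σ/2) (by linarith)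
    linarith [h0 ▸ this]
  nlinarith

/-- key pointwise bound used in the verification argument -/
lemma mu_prod_le_gamma (hmono : StrictMonoOn μ (Set.Ici 0)) (h0 : μ 0 = 0)
    (hγ : ∀ σ > (0:ℝ), IsGreatest ((fun s : ℝ => μ s * (σ - s)) '' Set.Icc 0 σ) (γ σ))
    {σ w : ℝ} (hσ : 0 < σ) (hw : 0 ≤ w) : μ w * (σ - w) ≤ γ σ := by
  rcases le_or_gt w σ with h | h
  · exact gamma_ub hγ hσ ⟨hw, h⟩
  · have : μ w * (σ - w) ≤ 0 :=
      mul_nonpos_of_nonneg_of_nonpos (mu_nonneg hmono h0 hw) (by linarith)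
    linarith [gamma_pos hmono h0 hγ hσ]

lemma gamma_mono (hmono : StrictMonoOn μ (Set.Ici 0)) (h0 : μ 0 = 0)
    (hγ : ∀ σ > (0:ℝ), IsGreatest ((fun s : ℝ => μ s * (σ - s)) '' Set.Icc 0 σ) (γ σ))
    {σ σ' : ℝ} (hσ : 0 < σ) (hle : σ ≤ σ') : γ σ ≤ γ σ' := by
  rcases gamma_mem hγ hσ with ⟨s, hs, heq⟩
  have h1 : μ s * (σ - s) ≤ μ s * (σ' - s) := by
    have := mu_nonneg hmono h0 hs.1
    nlinarith
  have h2 : μ s * (σ' - s) ≤ γ σ' :=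
    gamma_ub hγ (lt_of_lt_of_le hσ hle) ⟨hs.1, le_trans hs.2 hle⟩
  linarith [heq ▸ (le_trans h1 h2)]

lemma gamma_lip (hmono : StrictMonoOn μ (Set.Ici 0)) (h0 : μ 0 = 0)
    (hγ : ∀ σ > (0:ℝ), IsGreatest ((fun s : ℝ => μ s * (σ - s)) '' Set.Icc 0 σ) (γ σ))
    {σ σ' : ℝ} (hσ : 0 < σ) (hle : σ ≤ σ') : γ σ' ≤ γ σ + μ σ' * (σ' - σ) := by
  have hσ' : 0 < σ' := lt_of_lt_of_le hσ hle
  rcases gamma_mem hγ hσ' with ⟨s, hs, heq⟩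
  have hμs : 0 ≤ μ s := mu_nonneg hmono h0 hs.1
  have hμmono : μ s ≤ μ σ' := by
    rcases eq_or_lt_of_le hs.2 with h | h
    · rw [h]
    · exact le_of_lt (hmono hs.1 (le_of_lt hσ') h)
  rcases le_or_gt s σ with h | h
  · have h1 : μ s * (σ - s) ≤ γ σ := gamma_ub hγ hσ ⟨hs.1, h⟩
    have h2 : μ s * (σ' - σ) ≤ μ σ' * (σ' - σ) := by nlinarith
    nlinarith [heq]
  · have h1 : 0 ≤ γ σ := le_of_lt (gamma_pos hmono h0 hγ hσ)
    have h2 : μ s * (σ' - s) ≤ μ σ' * (σ' - σ) := by nlinarith [hs.2]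
    nlinarith [heq]

lemma gamma_contAt (hmono : StrictMonoOn μ (Set.Ici 0)) (h0 : μ 0 = 0)
    (hγ : ∀ σ > (0:ℝ), IsGreatest ((fun s : ℝ => μ s * (σ - s)) '' Set.Icc 0 σ) (γ σ))
    {σ₀ : ℝ} (hσ₀ : 0 < σ₀) : ContinuousAt γ σ₀ := by
  have key : ∀ σ σ' : ℝ, 0 < σ → σ ≤ σ' → σ' ≤ σ₀ + 1 → |γ σ' - γ σ| ≤ μ (σ₀ + 1) * (σ' - σ) := by
    intro σ σ' hσ hle hub
    have h1 : γ σ ≤ γ σ' := gamma_mono hmono h0 hγ hσ hle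
    have h2 : γ σ' ≤ γ σ + μ σ' * (σ' - σ) := gamma_lip hmono h0 hγ hσ hle
    have hσ' : 0 < σ' := lt_of_lt_of_le hσ hle
    have h3 : μ σ' ≤ μ (σ₀ + 1) := by
      rcases eq_or_lt_of_le hub with h | h
      · rw [h]
      · exact le_of_lt (hmono (Set.mem_Ici.2 (le_of_lt hσ')) (Set.mem_Ici.2 (by linarith)) h)
    have h4 : 0 ≤ μ σ' := mu_nonneg hmono h0 (le_of_lt hσ')
    rw [abs_le]
    constructor <;> nlinarith
  rw [Metric.continuousAt_iff]
  intro ε hε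
  have hM : 0 ≤ μ (σ₀ + 1) := mu_nonneg hmono h0 (by linarith)
  set M := μ (σ₀ + 1) with hMdef
  refine ⟨min (min (σ₀/2) 1) (ε / (M + 1)), lt_min (lt_min (by linarith) one_pos) (by positivity), ?_⟩
  intro σ hd
  rw [Real.dist_eq] at hd ⊢
  have hd1 : |σ - σ₀| < σ₀/2 := lt_of_lt_of_le hd (le_trans (min_le_left _ _) (min_le_left _ _))
  have hd2 : |σ - σ₀| < 1 := lt_of_lt_of_le hd (le_trans (min_le_left _ _) (min_le_right _ _))
  have hd3 : |σ - σ₀| < ε / (M + 1) := lt_of_lt_of_le hd (min_le_right _ _)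
  rw [abs_lt] at hd1 hd2
  have hσpos : 0 < σ := by linarith [hd1.1]
  have hbound : |γ σ - γ σ₀| ≤ M * |σ - σ₀| := by
    rcases le_total σ σ₀ with h | h
    · have := key σ σ₀ hσpos h (by linarith)
      rw [abs_sub_comm]
      rwa [abs_of_nonpos (by linarith : σ - σ₀ ≤ 0), neg_sub] at *
    · have := key σ₀ σ hσ₀ h (by linarith [hd2.2])
      rwa [abs_of_nonneg (by linarith : (0:ℝ) ≤ σ - σ₀)] at *
  have habs : 0 ≤ |σ - σ₀| := abs_nonneg _
  calc |γ σ - γ σ₀| ≤ M * |σ - σ₀| := hbound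
    _ ≤ (M + 1) * |σ - σ₀| := by nlinarith
    _ < (M + 1) * (ε / (M + 1)) := by
        apply mul_lt_mul_of_pos_left hd3 (by linarith)
    _ = ε := by field_simp


lemma inv_gamma_contAt (hpos : ∀ σ > (0:ℝ), 0 < γ σ) (hcont : ∀ σ > (0:ℝ), ContinuousAt γ σ)
    {σ : ℝ} (hσ : 0 < σ) : ContinuousAt (fun ξ => 1 / γ ξ) σ :=
  ContinuousAt.div continuousAt_const (hcont σ hσ) (ne_of_gt (hpos σ hσ))

lemma inv_gamma_contOn (hpos : ∀ σ > (0:ℝ), 0 < γ σ) (hcont : ∀ σ > (0:ℝ), ContinuousAt γ σ) :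
    ContinuousOn (fun ξ => 1 / γ ξ) (Set.Ioi 0) := fun σ hσ =>
  (inv_gamma_contAt hpos hcont hσ).continuousWithinAt

lemma uIcc_subset_Ioi {a b : ℝ} (ha : 0 < a) (hb : 0 < b) : Set.uIcc a b ⊆ Set.Ioi 0 := by
  intro x hx
  rw [Set.mem_uIcc] at hx
  rcases hx with ⟨h1,_⟩|⟨h1,_⟩ <;> simp only [Set.mem_Ioi] <;> linarith
lemma inv_gamma_integrable (hpos : ∀ σ > (0:ℝ), 0 < γ σ) (hcont : ∀ σ > (0:ℝ), ContinuousAt γ σ)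
    {a b : ℝ} (ha : 0 < a) (hb : 0 < b) :
    IntervalIntegrable (fun ξ => 1 / γ ξ) volume a b :=
  ((inv_gamma_contOn hpos hcont).mono (uIcc_subset_Ioi ha hb)).intervalIntegrable

lemma G_hasDerivAt (hpos : ∀ σ > (0:ℝ), 0 < γ σ) (hcont : ∀ σ > (0:ℝ), ContinuousAt γ σ)
    {c σ : ℝ} (hc : 0 < c) (hσ : 0 < σ) :
    HasDerivAt (fun u => ∫ ξ in c..u, 1 / γ ξ) (1 / γ σ) σ := by
  apply intervalIntegral.integral_hasDerivAt_right
     (inv_gamma_integrable hpos hcont hc hσ)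
     (ContinuousOn.stronglyMeasurableAtFilter isOpen_Ioi (inv_gamma_contOn hpos hcont) σ hσ)
     (inv_gamma_contAt hpos hcont hσ)

lemma G_nonneg (hpos : ∀ σ > (0:ℝ), 0 < γ σ) {c x : ℝ} (hc : 0 < c) (hx : c ≤ x) :
    0 ≤ ∫ ξ in c..x, 1 / γ ξ := by
  apply intervalIntegral.integral_nonneg hx
  intro u hu
  have : 0 < γ u := hpos u (lt_of_lt_of_le hc hu.1)
  positivity

lemma G_nonpos (hpos : ∀ σ > (0:ℝ), 0 < γ σ) {c x : ℝ} (hx0 : 0 ≤ x) (hx : x ≤ c) :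
    (∫ ξ in c..x, 1 / γ ξ) ≤ 0 := by
  rw [intervalIntegral.integral_symm]
  have h : 0 ≤ ∫ ξ in x..c, 1 / γ ξ := by
    apply intervalIntegral.integral_nonneg_of_ae_restrict hx
    have h0 : ∀ᵐ u ∂(volume.restrict (Set.Icc x c)), u ≠ 0 := by
      apply ae_restrict_of_ae
      rw [MeasureTheory.ae_iff]
      simp only [ne_eq, not_not]
      have : {a : ℝ | a = 0} = {(0:ℝ)} := by ext a; simp
      rw [this]; exact Real.volume_singleton
    filter_upwards [h0, MeasureTheory.ae_restrict_mem measurableSet_Icc] with u hu hmem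
    have : 0 < γ u := hpos u (lt_of_le_of_ne (le_trans hx0 hmem.1) (Ne.symm hu))
    positivity
  linarith

lemma G_pos (hpos : ∀ σ > (0:ℝ), 0 < γ σ) (hcont : ∀ σ > (0:ℝ), ContinuousAt γ σ)
    (hint : ∀ {a b : ℝ}, 0 < a → 0 < b → IntervalIntegrable (fun ξ => 1 / γ ξ) volume a b)
    {c x : ℝ} (hc : 0 < c) (hx : c < x) :
    0 < ∫ ξ in c..x, 1 / γ ξ := by
  apply intervalIntegral.intervalIntegral_pos_of_pos_on (hint hc (lt_trans hc hx)) _ hx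
  intro u hu
  have : 0 < γ u := hpos u (lt_trans hc hu.1)
  positivity

/-- realize any value in [0, γ σ] as μ w (σ - w) -/
lemma realize (hμc : Continuous μ) (h0 : μ 0 = 0)
    (hγ : ∀ σ > (0:ℝ), IsGreatest ((fun s : ℝ => μ s * (σ - s)) '' Set.Icc 0 σ) (γ σ))
    {σ v : ℝ} (hσ : 0 < σ) (hv : 0 ≤ v) (hv' : v ≤ γ σ) :
    ∃ w ∈ Set.Icc 0 σ, μ w * (σ - w) = v := by
  rcases (hγ σ hσ).1 with ⟨s, hs, heq0⟩
  have heq : μ s * (σ - s) = γ σ := heq0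
  have hIVT := intermediate_value_Icc hs.1 (hμc.mul (continuous_const.sub continuous_id)).continuousOn
      (f := fun w => μ w * (σ - w))
  have hv'' : v ∈ Set.Icc (μ 0 * (σ - 0)) (μ s * (σ - s)) := by
    rw [h0]; simp only [Set.mem_Icc]
    exact ⟨by simpa using hv, by rw [heq]; exact hv'⟩
  rcases hIVT hv'' with ⟨w, hw, hweq⟩
  exact ⟨w, ⟨hw.1, le_trans hw.2 hs.2⟩, hweq⟩

lemma F_strictMono (hpos : ∀ σ > (0:ℝ), 0 < γ σ) (hcont : ∀ σ > (0:ℝ), ContinuousAt γ σ)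
    (hderiv : ∀ {c σ : ℝ}, 0 < c → 0 < σ →
      HasDerivAt (fun u => ∫ ξ in c..u, 1 / γ ξ) (1 / γ σ) σ)
    {c : ℝ} (hc : 0 < c) :
    StrictMonoOn (fun u => ∫ ξ in c..u, 1 / γ ξ) (Set.Ioi 0) := by
  apply strictMonoOn_of_deriv_pos (convex_Ioi 0)
  · intro x hx
    exact (hderiv hc hx).continuousAt.continuousWithinAt
  · intro x hx
    rw [interior_Ioi] at hx
    rw [(hderiv hc hx).deriv]
    have := hpos x hx
    positivity

/-- trapezoid speed profile -/
noncomputable def psi (lam tA : ℝ) : ℝ → ℝ :=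
  fun u => min 1 (max 0 (min (u / lam) ((tA - u) / lam)))

noncomputable def phi (lam tA : ℝ) : ℝ → ℝ :=
  fun τ => ∫ u in (0:ℝ)..τ, psi lam tA u

variable {lam tA : ℝ}

lemma psi_cont (hlam : 0 < lam) : Continuous (psi lam tA) := by
  unfold psi
  fun_prop

lemma psi_nonneg (u : ℝ) : 0 ≤ psi lam tA u := by
  unfold psi
  rcases le_total (1:ℝ) (max 0 (min (u / lam) ((tA - u) / lam))) with h | h
  · rw [min_eq_left h]; norm_num
  · rw [min_eq_right h]; exact le_max_left _ _

lemma psi_le_one (u : ℝ) : psi lam tA u ≤ 1 := min_le_left _ _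

lemma psi_eq_zero_left (hlam : 0 < lam) {u : ℝ} (hu : u ≤ 0) : psi lam tA u = 0 := by
  unfold psi
  have h1 : u / lam ≤ 0 := div_nonpos_of_nonpos_of_nonneg hu (le_of_lt hlam)
  have : min (u / lam) ((tA - u) / lam) ≤ 0 := le_trans (min_le_left _ _) h1
  rw [max_eq_left this, min_eq_right (by norm_num : (0:ℝ) ≤ 1)]

lemma psi_eq_zero_right (hlam : 0 < lam) {u : ℝ} (hu : tA ≤ u) : psi lam tA u = 0 := by
  unfold psi
  have h1 : (tA - u) / lam ≤ 0 := div_nonpos_of_nonpos_of_nonneg (by linarith) (le_of_lt hlam)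
  have : min (u / lam) ((tA - u) / lam) ≤ 0 := le_trans (min_le_right _ _) h1
  rw [max_eq_left this, min_eq_right (by norm_num : (0:ℝ) ≤ 1)]

lemma psi_eq_one (hlam : 0 < lam) {u : ℝ} (h1 : lam ≤ u) (h2 : u ≤ tA - lam) :
    psi lam tA u = 1 := by
  unfold psi
  have ha : (1:ℝ) ≤ u / lam := (one_le_div hlam).2 h1
  have hb : (1:ℝ) ≤ (tA - u) / lam := (one_le_div hlam).2 (by linarith)
  have : (1:ℝ) ≤ min (u / lam) ((tA - u) / lam) := le_min ha hb
  rw [min_eq_left (le_trans this (le_max_right _ _))]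

lemma phi_hasDeriv (hlam : 0 < lam) (τ : ℝ) :
    HasDerivAt (phi lam tA) (psi lam tA τ) τ := by
  apply intervalIntegral.integral_hasDerivAt_right
    ((psi_cont hlam).intervalIntegrable (μ := volume) _ _)
    ((psi_cont hlam).stronglyMeasurable.stronglyMeasurableAtFilter)
    (psi_cont hlam).continuousAt

lemma phi_zero (hlam : 0 < lam) {τ : ℝ} (hτ : τ ≤ 0) : phi lam tA τ = 0 := by
  unfold phi
  rw [intervalIntegral.integral_congr (g := fun _ => (0:ℝ)) ?_, intervalIntegral.integral_const]
  · simp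
  · intro u hu
    rw [Set.uIcc_of_ge hτ, Set.mem_Icc] at hu
    exact psi_eq_zero_left hlam hu.2

lemma phi_diff (hlam : 0 < lam) (τ τ' : ℝ) :
    phi lam tA τ' - phi lam tA τ = ∫ u in τ..τ', psi lam tA u := by
  unfold phi
  have h1 := intervalIntegral.integral_add_adjacent_intervals (μ := volume)
    ((psi_cont (tA := tA) hlam).intervalIntegrable 0 τ) ((psi_cont hlam).intervalIntegrable τ τ')
  linarith

lemma phi_mono (hlam : 0 < lam) {τ τ' : ℝ} (h : τ ≤ τ') : phi lam tA τ ≤ phi lam tA τ' := by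
  have := phi_diff (tA := tA) hlam τ τ'
  have h2 : 0 ≤ ∫ u in τ..τ', psi lam tA u :=
    intervalIntegral.integral_nonneg h (fun u _ => psi_nonneg u)
  linarith

lemma phi_tA (hlam : 0 < lam) (htA : 2 * lam ≤ tA) : phi lam tA tA = tA - lam := by
  have i1 : (∫ u in (0:ℝ)..lam, psi lam tA u) = lam / 2 := by
    rw [intervalIntegral.integral_congr (g := fun u => u / lam) ?_]
    · rw [intervalIntegral.integral_div, integral_id]
      field_simp; ring
    · intro u hu
      rw [Set.uIcc_of_le (le_of_lt hlam), Set.mem_Icc] at hu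
      unfold psi
      have ha : 0 ≤ u / lam := div_nonneg hu.1 (le_of_lt hlam)
      have hb : u / lam ≤ (tA - u) / lam := by gcongr ?_ / lam; linarith [hu.2]
      have hc : u / lam ≤ 1 := (div_le_one hlam).2 hu.2
      rw [min_eq_left hb, max_eq_right ha, min_eq_right hc]
  have i2 : (∫ u in lam..(tA - lam), psi lam tA u) = tA - 2 * lam := by
    rw [intervalIntegral.integral_congr (g := fun _ => (1:ℝ)) ?_, integral_one]
    · ring
    · intro u hu
      rw [Set.uIcc_of_le (by linarith), Set.mem_Icc] at hu
      exact psi_eq_one hlam hu.1 hu.2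
  have i3 : (∫ u in (tA - lam)..tA, psi lam tA u) = lam / 2 := by
    rw [intervalIntegral.integral_congr (g := fun u => (tA - u) / lam) ?_]
    · rw [intervalIntegral.integral_div]
      rw [intervalIntegral.integral_sub (intervalIntegrable_const) intervalIntegral.intervalIntegrable_id]
      rw [integral_id, intervalIntegral.integral_const]
      field_simp; ring
    · intro u hu
      rw [Set.uIcc_of_le (by linarith), Set.mem_Icc] at hu
      unfold psi
      have ha : 0 ≤ (tA - u) / lam := div_nonneg (by linarith [hu.2]) (le_of_lt hlam)
      have hb : (tA - u) / lam ≤ u / lam := by gcongr ?_ / lam; linarith [hu.1]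
      have hc : (tA - u) / lam ≤ 1 := (div_le_one hlam).2 (by linarith [hu.1])
      rw [min_eq_right hb, max_eq_right ha, min_eq_right hc]
  have e1 : phi lam tA lam - phi lam tA 0 = lam / 2 := by rw [phi_diff hlam]; exact i1
  have e2 : phi lam tA (tA - lam) - phi lam tA lam = tA - 2 * lam := by rw [phi_diff hlam]; exact i2
  have e3 : phi lam tA tA - phi lam tA (tA - lam) = lam / 2 := by rw [phi_diff hlam]; exact i3
  have e0 : phi lam tA 0 = 0 := phi_zero hlam le_rfl
  linarith

lemma phi_const_right (hlam : 0 < lam) {τ : ℝ} (hτ : tA ≤ τ) : phi lam tA τ = phi lam tA tA := by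
  have := phi_diff (tA := tA) hlam tA τ
  have h2 : (∫ u in tA..τ, psi lam tA u) = 0 := by
    rw [intervalIntegral.integral_congr (g := fun _ => (0:ℝ)) ?_]
    · simp
    · intro u hu
      rw [Set.uIcc_of_le hτ, Set.mem_Icc] at hu
      exact psi_eq_zero_right hlam hu.1
  linarith

lemma phi_le (hlam : 0 < lam) (htA : 2 * lam ≤ tA) (τ : ℝ) : phi lam tA τ ≤ tA - lam := by
  rcases le_total τ tA with h | h
  · have := phi_mono (tA := tA) hlam h
    rw [phi_tA hlam htA] at this; exact this
  · rw [phi_const_right hlam h, phi_tA hlam htA]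

lemma phi_nonneg (hlam : 0 < lam) (τ : ℝ) : 0 ≤ phi lam tA τ := by
  rcases le_total τ 0 with h | h
  · rw [phi_zero hlam h]
  · have := phi_mono (tA := tA) hlam h
    rwa [phi_zero hlam le_rfl] at this


/-- Inverse of the time-of-flight function F = ∫ 1/γ. -/
lemma finv_pack (hpos : ∀ σ > (0:ℝ), 0 < γ σ)
    (hderiv : ∀ {c σ : ℝ}, 0 < c → 0 < σ →
      HasDerivAt (fun u => ∫ ξ in c..u, 1 / γ ξ) (1 / γ σ) σ)
    (hFmono : ∀ {c : ℝ}, 0 < c → StrictMonoOn (fun u => ∫ ξ in c..u, 1 / γ ξ) (Set.Ioi 0))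
    {c ℓ R : ℝ} (hc : 0 < c) (hℓ : 0 < ℓ) (hℓR : ℓ < R) :
    ∃ Finv : ℝ → ℝ,
      (∀ y ∈ Set.Icc ((fun u => ∫ ξ in c..u, 1 / γ ξ) ℓ) ((fun u => ∫ ξ in c..u, 1 / γ ξ) R),
        Finv y ∈ Set.Icc ℓ R ∧ (∫ ξ in c..(Finv y), 1 / γ ξ) = y) ∧
      (∀ y ∈ Set.Ioo ((fun u => ∫ ξ in c..u, 1 / γ ξ) ℓ) ((fun u => ∫ ξ in c..u, 1 / γ ξ) R),
        HasDerivAt Finv (γ (Finv y)) y) := by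
  set F : ℝ → ℝ := fun u => ∫ ξ in c..u, 1 / γ ξ with hF
  have hsub : Set.Icc ℓ R ⊆ Set.Ioi 0 := fun x hx => lt_of_lt_of_le hℓ hx.1
  have hFcont : ContinuousOn F (Set.Icc ℓ R) := fun x hx =>
    (hderiv hc (hsub hx)).continuousAt.continuousWithinAt
  have hIVT : ∀ y ∈ Set.Icc (F ℓ) (F R), ∃ σ, σ ∈ Set.Icc ℓ R ∧ F σ = y := by
    intro y hy
    rcases intermediate_value_Icc (le_of_lt hℓR) hFcont hy with ⟨σ, hσ, hσy⟩
    exact ⟨σ, hσ, hσy⟩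
  classical
  set Finv : ℝ → ℝ := fun y => if h : ∃ σ, σ ∈ Set.Icc ℓ R ∧ F σ = y then h.choose else ℓ
    with hFinv
  have hkey : ∀ y ∈ Set.Icc (F ℓ) (F R), Finv y ∈ Set.Icc ℓ R ∧ F (Finv y) = y := by
    intro y hy
    have h := hIVT y hy
    rw [hFinv]
    simp only [dif_pos h]
    exact h.choose_spec
  have hmono : ∀ {a b : ℝ}, 0 < a → 0 < b → a < b → F a < F b :=
    fun ha hb hab => hFmono hc (Set.mem_Ioi.2 ha) (Set.mem_Ioi.2 hb) hab
  have hcontAt : ∀ y ∈ Set.Ioo (F ℓ) (F R), ContinuousAt Finv y := by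
    intro y hy
    obtain ⟨hu, hFu⟩ := hkey y ⟨le_of_lt hy.1, le_of_lt hy.2⟩
    set u := Finv y
    have huℓ : ℓ < u := by
      rcases eq_or_lt_of_le hu.1 with h | h
      · exfalso; rw [← h] at hFu; rw [hFu] at hy; exact lt_irrefl _ hy.1
      · exact h
    have huR : u < R := by
      rcases eq_or_lt_of_le hu.2 with h | h
      · exfalso; rw [h] at hFu; rw [hFu] at hy; exact lt_irrefl _ hy.2
      · exact h
    rw [Metric.continuousAt_iff]
    intro ε hε
    set ε' := min (ε/2) (min ((R - u)/2) ((u - ℓ)/2)) with hε'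
    have hε'pos : 0 < ε' := by
      apply lt_min (by linarith) (lt_min (by linarith) (by linarith))
    have hε'a : ε' ≤ ε/2 := min_le_left _ _
    have hε'b : ε' ≤ (R - u)/2 := le_trans (min_le_right _ _) (min_le_left _ _)
    have hε'c : ε' ≤ (u - ℓ)/2 := le_trans (min_le_right _ _) (min_le_right _ _)
    have hm1 : (0:ℝ) < u - ε' := by linarith
    have hm2 : (0:ℝ) < u + ε' := by linarith
    have hmu : (0:ℝ) < u := by linarith
    have hd1 : F (u - ε') < y := by
      rw [← hFu]; exact hmono hm1 hmu (by linarith)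
    have hd2 : y < F (u + ε') := by
      rw [← hFu]; exact hmono hmu hm2 (by linarith)
    refine ⟨min (F (u + ε') - y) (y - F (u - ε')), lt_min (by linarith) (by linarith), ?_⟩
    intro y' hy'
    rw [Real.dist_eq] at hy'
    have hy'1 : |y' - y| < F (u + ε') - y := lt_of_lt_of_le hy' (min_le_left _ _)
    have hy'2 : |y' - y| < y - F (u - ε') := lt_of_lt_of_le hy' (min_le_right _ _)
    rw [abs_lt] at hy'1 hy'2
    have hy'lo : F (u - ε') < y' := by linarith [hy'2.1]
    have hy'hi : y' < F (u + ε') := by linarith [hy'1.2]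
    have hy'mem : y' ∈ Set.Icc (F ℓ) (F R) := by
      constructor
      · calc F ℓ ≤ F (u - ε') := by
              rcases eq_or_lt_of_le (by linarith : ℓ ≤ u - ε') with h | h
              · rw [h]
              · exact le_of_lt (hmono hℓ hm1 h)
          _ ≤ y' := le_of_lt hy'lo
      · calc y' ≤ F (u + ε') := le_of_lt hy'hi
          _ ≤ F R := by
              rcases eq_or_lt_of_le (by linarith : u + ε' ≤ R) with h | h
              · rw [h]
              · exact le_of_lt (hmono hm2 (lt_trans hℓ hℓR) h)
    obtain ⟨hu', hFu'⟩ := hkey y' hy'mem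
    have hu'mem : (0:ℝ) < Finv y' := hsub hu'
    have hlt1 : u - ε' < Finv y' := by
      by_contra h
      push_neg at h
      rcases eq_or_lt_of_le h with h2 | h2
      · rw [← h2, hFu'] at hy'lo; exact lt_irrefl _ hy'lo
      · have := hmono hu'mem hm1 h2
        rw [hFu'] at this; linarith
    have hlt2 : Finv y' < u + ε' := by
      by_contra h
      push_neg at h
      rcases eq_or_lt_of_le h with h2 | h2
      · rw [h2, hFu'] at hy'hi; exact lt_irrefl _ hy'hi
      · have := hmono hm2 hu'mem h2
        rw [hFu'] at this; linarith
    rw [Real.dist_eq, abs_lt]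
    constructor <;> [linarith; linarith]
  refine ⟨Finv, hkey, ?_⟩
  intro y hy
  obtain ⟨hu, hFu⟩ := hkey y ⟨le_of_lt hy.1, le_of_lt hy.2⟩
  have hupos : 0 < Finv y := hsub hu
  have hne : 1 / γ (Finv y) ≠ 0 := by
    have := hpos _ hupos
    positivity
  have hev : ∀ᶠ y' in nhds y, F (Finv y') = y' := by
    filter_upwards [Ioo_mem_nhds hy.1 hy.2] with y' hy'
    exact (hkey y' ⟨le_of_lt hy'.1, le_of_lt hy'.2⟩).2
  have := HasDerivAt.of_local_left_inverse (hcontAt y hy) (hderiv hc hupos) hne hev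
  have heq : (1 / γ (Finv y))⁻¹ = γ (Finv y) := by rw [one_div, inv_inv]
  rwa [heq] at this


/-- construction of a near-optimal single-coordinate trajectory -/
lemma build (hμc : Continuous μ) (hmono : StrictMonoOn μ (Set.Ici 0)) (h0 : μ 0 = 0)
    (hγ : ∀ σ > (0:ℝ), IsGreatest ((fun s : ℝ => μ s * (σ - s)) '' Set.Icc 0 σ) (γ σ))
    {sb : ℝ} (hsb : 0 < sb) {ρ xb lam : ℝ} (hρ : 0 < ρ) (hxb : sb < xb) (hlam : 0 < lam)
    (hlam2 : lam ≤ ρ * ∫ ξ in sb..xb, 1 / γ ξ) :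
    ∃ S d : ℝ → ℝ, ∃ tA : ℝ,
      tA = ρ * (∫ ξ in sb..xb, 1 / γ ξ) + lam ∧
      (∀ τ, τ ≤ 0 → S τ = xb) ∧ (∀ τ, tA ≤ τ → S τ = sb) ∧
      (∀ τ, sb ≤ S τ ∧ S τ ≤ xb) ∧
      (∀ τ, HasDerivAt S (-(d τ / ρ)) τ) ∧
      (∀ τ, ∃ w, w ∈ Set.Icc 0 (S τ) ∧ μ w * (S τ - w) = d τ) ∧
      (∀ τ, τ ≤ 0 → d τ = 0) ∧ (∀ τ, tA ≤ τ → d τ = 0) := by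
  have hpos : ∀ σ > (0:ℝ), 0 < γ σ := fun σ hσ => gamma_pos hmono h0 hγ hσ
  have hcont : ∀ σ > (0:ℝ), ContinuousAt γ σ := fun σ hσ => gamma_contAt hmono h0 hγ hσ
  have hderiv : ∀ {c σ : ℝ}, 0 < c → 0 < σ →
      HasDerivAt (fun u => ∫ ξ in c..u, 1 / γ ξ) (1 / γ σ) σ :=
    fun hc hσ => G_hasDerivAt hpos hcont hc hσ
  have hFmono' : ∀ {c : ℝ}, 0 < c → StrictMonoOn (fun u => ∫ ξ in c..u, 1 / γ ξ) (Set.Ioi 0) :=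
    fun hc => F_strictMono hpos hcont hderiv hc
  set F : ℝ → ℝ := fun u => ∫ ξ in sb..u, 1 / γ ξ with hFdef
  have hFmono : ∀ {a b : ℝ}, 0 < a → 0 < b → a < b → F a < F b :=
    fun ha hb hab => hFmono' hsb (Set.mem_Ioi.2 ha) (Set.mem_Ioi.2 hb) hab
  have hFinj : ∀ {a b : ℝ}, 0 < a → 0 < b → F a = F b → a = b := by
    intro a b ha hb hab
    rcases lt_trichotomy a b with h | h | h
    · exact absurd hab (ne_of_lt (hFmono ha hb h))
    · exact h
    · exact absurd hab.symm (ne_of_lt (hFmono hb ha h))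
  set Δ : ℝ := F xb with hΔdef
  have hΔpos : 0 < Δ := G_pos hpos hcont (fun ha hb => inv_gamma_integrable hpos hcont ha hb) hsb hxb
  set tA : ℝ := ρ * Δ + lam with htAdef
  have htA2 : 2 * lam ≤ tA := by rw [htAdef]; simp only [hΔdef] at hlam2 ⊢; linarith
  -- inverse function on [ℓ, R] = [sb/2, xb + 1]
  obtain ⟨Finv, hkey, hder⟩ := finv_pack hpos hderiv hFmono' (c := sb) hsb
    (by linarith : (0:ℝ) < sb/2) (by linarith : sb/2 < xb + 1)
  have hFsb : F sb = 0 := intervalIntegral.integral_same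
  have hFl : F (sb/2) < 0 := by
    rw [← hFsb]
    exact hFmono (by linarith) hsb (by linarith)
  have hFR : Δ < F (xb + 1) := hFmono (by linarith) (by linarith) (by linarith)
  -- the trajectory
  set y : ℝ → ℝ := fun τ => Δ - phi lam tA τ / ρ with hydef
  have hymem : ∀ τ, y τ ∈ Set.Ioo (F (sb/2)) (F (xb + 1)) := by
    intro τ
    have h1 : phi lam tA τ ≤ tA - lam := phi_le hlam htA2 τ
    have h2 : 0 ≤ phi lam tA τ := phi_nonneg hlam τ
    have h3 : tA - lam = ρ * Δ := by rw [htAdef]; ring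
    show F (sb/2) < y τ ∧ y τ < F (xb + 1)
    constructor
    · have : 0 ≤ y τ := by
        rw [hydef]
        simp only
        rw [sub_nonneg, div_le_iff₀ hρ]
        rw [h3] at h1; linarith [mul_comm ρ Δ]
      exact lt_of_lt_of_le hFl this
    · have : y τ ≤ Δ := by
        rw [hydef]; simp only
        have : 0 ≤ phi lam tA τ / ρ := div_nonneg h2 (le_of_lt hρ)
        linarith
      exact lt_of_le_of_lt this hFR
  have hymem' : ∀ τ, y τ ∈ Set.Icc (F (sb/2)) (F (xb + 1)) :=
    fun τ => Set.mem_Icc_of_Ioo (hymem τ)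
  set S : ℝ → ℝ := fun τ => Finv (y τ) with hSdef
  have hSkey : ∀ τ, S τ ∈ Set.Icc (sb/2) (xb+1) ∧ F (S τ) = y τ := by
    intro τ
    exact hkey (y τ) (hymem' τ)
  have hSpos : ∀ τ, 0 < S τ := fun τ => by linarith [(hSkey τ).1.1]
  -- range bounds
  have hrange : ∀ τ, sb ≤ S τ ∧ S τ ≤ xb := by
    intro τ
    obtain ⟨hm, hFS⟩ := hSkey τ
    have hyb : 0 ≤ y τ ∧ y τ ≤ Δ := by
      have h1 : phi lam tA τ ≤ tA - lam := phi_le hlam htA2 τ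
      have h2 : 0 ≤ phi lam tA τ := phi_nonneg hlam τ
      have h3 : tA - lam = ρ * Δ := by rw [htAdef]; ring
      constructor
      · rw [hydef]; simp only
        rw [sub_nonneg, div_le_iff₀ hρ]
        rw [h3] at h1; linarith [mul_comm ρ Δ]
      · rw [hydef]; simp only
        have : 0 ≤ phi lam tA τ / ρ := div_nonneg h2 (le_of_lt hρ)
        linarith
    constructor
    · by_contra h
      push_neg at h
      have := hFmono (hSpos τ) hsb h
      rw [hFS, hFsb] at this
      linarith [hyb.1]
    · by_contra h
      push_neg at h
      have := hFmono (by linarith : (0:ℝ) < xb) (hSpos τ) h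
      rw [hFS] at this
      linarith [hyb.2]
  set d : ℝ → ℝ := fun τ => psi lam tA τ * γ (S τ) with hddef
  refine ⟨S, d, tA, rfl, ?_, ?_, hrange, ?_, ?_, ?_, ?_⟩
  · -- τ ≤ 0 → S τ = xb
    intro τ hτ
    have hphi : phi lam tA τ = 0 := phi_zero hlam hτ
    have hy : y τ = Δ := by rw [hydef]; simp only [hphi]; ring
    have := (hSkey τ).2
    rw [hy] at this
    exact hFinj (hSpos τ) (by linarith) this
  · -- tA ≤ τ → S τ = sb
    intro τ hτ
    have hphi : phi lam tA τ = tA - lam := by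
      rw [phi_const_right hlam hτ, phi_tA hlam htA2]
    have hy : y τ = 0 := by
      rw [hydef]; simp only [hphi]
      rw [htAdef, add_sub_cancel_right, mul_div_cancel_left₀ _ hρ.ne', sub_self]
    have := (hSkey τ).2
    rw [hy, ← hFsb] at this
    exact hFinj (hSpos τ) hsb this
  · -- derivative
    intro τ
    have houter : HasDerivAt Finv (γ (S τ)) (y τ) := hder (y τ) (hymem τ)
    have hinner : HasDerivAt y (-(psi lam tA τ / ρ)) τ := by
      rw [hydef]
      simpa using (HasDerivAt.const_sub Δ ((phi_hasDeriv hlam τ).div_const ρ))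
    have := HasDerivAt.comp τ houter hinner
    have heq : γ (S τ) * (-(psi lam tA τ / ρ)) = -(d τ / ρ) := by
      rw [hddef]; simp only; ring
    rw [heq] at this
    exact this
  · -- realization
    intro τ
    have h1 : 0 ≤ d τ := by
      rw [hddef]; simp only
      exact mul_nonneg (psi_nonneg τ) (le_of_lt (hpos _ (hSpos τ)))
    have h2 : d τ ≤ γ (S τ) := by
      rw [hddef]; simp only
      nlinarith [psi_le_one (lam := lam) (tA := tA) τ, hpos _ (hSpos τ)]
    exact realize hμc h0 hγ (hSpos τ) h1 h2
  · intro τ hτ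
    rw [hddef]; simp only [psi_eq_zero_left hlam hτ]; ring
  · intro τ hτ
    rw [hddef]; simp only [psi_eq_zero_right hlam hτ]; ring

set_option maxHeartbeats 2000000 in
/-- the verification (lower bound) argument -/
lemma lower (hmono : StrictMonoOn μ (Set.Ici 0)) (h0 : μ 0 = 0)
    (hγ : ∀ σ > (0:ℝ), IsGreatest ((fun s : ℝ => μ s * (σ - s)) '' Set.Icc 0 σ) (γ σ))
    {sb r x₁ x₂ t : ℝ} (hsb : 0 < sb) (hr : r ∈ Set.Ioo (0:ℝ) 1)
    (hx₁ : 0 ≤ x₁) (hx₂ : 0 ≤ x₂) (ht0 : 0 ≤ t)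
    {s₁ s₂ a sst : ℝ → ℝ}
    (hs₁0 : s₁ 0 = x₁) (hs₂0 : s₂ 0 = x₂)
    (ha : ∀ τ, a τ ∈ Set.Icc (0:ℝ) 1)
    (hsst : ∀ τ, sst τ ∈ Set.Icc (0:ℝ) (a τ * s₁ τ + (1 - a τ) * s₂ τ))
    (hd₁ : ∀ τ, HasDerivAt s₁ (-(a τ / r) * (μ (sst τ) * (s₁ τ - sst τ))) τ)
    (hd₂ : ∀ τ, HasDerivAt s₂ (-((1 - a τ) / (1 - r)) * (μ (sst τ) * (s₂ τ - sst τ))) τ)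
    (htarget : max (s₁ t) (s₂ t) ≤ sb) :
    r * max 0 (∫ ξ in sb..x₁, 1 / γ ξ) + (1 - r) * max 0 (∫ ξ in sb..x₂, 1 / γ ξ) ≤ t := by
  obtain ⟨hr0, hr1⟩ := hr
  have hr1' : 0 < 1 - r := by linarith
  have hpos : ∀ σ > (0:ℝ), 0 < γ σ := fun σ hσ => gamma_pos hmono h0 hγ hσ
  have hcont : ∀ σ > (0:ℝ), ContinuousAt γ σ := fun σ hσ => gamma_contAt hmono h0 hγ hσ
  set G : ℝ → ℝ := fun u => ∫ ξ in sb..u, 1 / γ ξ with hGdef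
  have hGd : ∀ {σ : ℝ}, 0 < σ → HasDerivAt G (1 / γ σ) σ := fun hσ => G_hasDerivAt hpos hcont hsb hσ
  have hc₁ : Continuous s₁ := continuous_iff_continuousAt.2 fun τ => (hd₁ τ).continuousAt
  have hc₂ : Continuous s₂ := continuous_iff_continuousAt.2 fun τ => (hd₂ τ).continuousAt
  have hsst0 : ∀ τ, 0 ≤ sst τ := fun τ => (hsst τ).1
  -- the fraction bound
  have hq : ∀ τ (s : ℝ), sb ≤ s → μ (sst τ) * (s - sst τ) / γ s ≤ 1 := by
    intro τ s hs
    have hspos : 0 < s := lt_of_lt_of_le hsb hs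
    rw [div_le_one (hpos s hspos)]
    exact mu_prod_le_gamma hmono h0 hγ hspos (hsst0 τ)
  -- first hitting times
  have hAne : ∀ s : ℝ → ℝ, s t ≤ sb → (Set.Icc 0 t ∩ {τ | s τ ≤ sb}).Nonempty :=
    fun s hst => ⟨t, ⟨ht0, le_rfl⟩, hst⟩
  have hAbdd : ∀ s : ℝ → ℝ, BddBelow (Set.Icc 0 t ∩ {τ | s τ ≤ sb}) :=
    fun s => ⟨0, fun τ hτ => hτ.1.1⟩
  have hAclosed : ∀ s : ℝ → ℝ, Continuous s → IsClosed (Set.Icc 0 t ∩ {τ | s τ ≤ sb}) :=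
    fun s hcs => isClosed_Icc.inter (isClosed_le hcs continuous_const)
  set e₁ : ℝ := sInf (Set.Icc 0 t ∩ {τ | s₁ τ ≤ sb}) with he₁def
  set e₂ : ℝ := sInf (Set.Icc 0 t ∩ {τ | s₂ τ ≤ sb}) with he₂def
  have hst₁ : s₁ t ≤ sb := le_trans (le_max_left _ _) htarget
  have hst₂ : s₂ t ≤ sb := le_trans (le_max_right _ _) htarget
  have he₁mem : e₁ ∈ Set.Icc 0 t ∩ {τ | s₁ τ ≤ sb} :=
    (hAclosed s₁ hc₁).csInf_mem (hAne s₁ hst₁) (hAbdd s₁)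
  have he₂mem : e₂ ∈ Set.Icc 0 t ∩ {τ | s₂ τ ≤ sb} :=
    (hAclosed s₂ hc₂).csInf_mem (hAne s₂ hst₂) (hAbdd s₂)
  have he₁0 : 0 ≤ e₁ := he₁mem.1.1
  have he₂0 : 0 ≤ e₂ := he₂mem.1.1
  have he₁t : e₁ ≤ t := he₁mem.1.2
  have he₂t : e₂ ≤ t := he₂mem.1.2
  have hgt₁ : ∀ τ, 0 ≤ τ → τ < e₁ → sb < s₁ τ := by
    intro τ hτ0 hτe
    by_contra h
    push_neg at h
    have : e₁ ≤ τ := csInf_le (hAbdd s₁) ⟨⟨hτ0, le_trans (le_of_lt hτe) he₁t⟩, h⟩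
    linarith
  have hgt₂ : ∀ τ, 0 ≤ τ → τ < e₂ → sb < s₂ τ := by
    intro τ hτ0 hτe
    by_contra h
    push_neg at h
    have : e₂ ≤ τ := csInf_le (hAbdd s₂) ⟨⟨hτ0, le_trans (le_of_lt hτe) he₂t⟩, h⟩
    linarith
  have heq₁ : 0 < e₁ → s₁ e₁ = sb := by
    intro he
    have hh : s₁ e₁ ≤ sb := he₁mem.2
    rcases eq_or_lt_of_le hh with h | h
    · exact h
    · exfalso
      have hca := hc₁.continuousAt (x := e₁)
      rw [Metric.continuousAt_iff] at hca
      obtain ⟨δ, hδ, hb⟩ := hca (sb - s₁ e₁) (by linarith)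
      set τ := max 0 (e₁ - δ/2) with hτdef
      have hτ0 : 0 ≤ τ := le_max_left _ _
      have hτlt : τ < e₁ := by
        apply max_lt he
        linarith
      have hτd : dist τ e₁ < δ := by
        rw [Real.dist_eq, abs_lt]
        constructor
        · have : e₁ - δ/2 ≤ τ := le_max_right _ _
          linarith
        · linarith
      have := hb hτd
      rw [Real.dist_eq, abs_lt] at this
      have h1 : s₁ τ < sb := by linarith [this.2]
      linarith [hgt₁ τ hτ0 hτlt]
  have heq₂ : 0 < e₂ → s₂ e₂ = sb := by
    intro he
    have hh : s₂ e₂ ≤ sb := he₂mem.2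
    rcases eq_or_lt_of_le hh with h | h
    · exact h
    · exfalso
      have hca := hc₂.continuousAt (x := e₂)
      rw [Metric.continuousAt_iff] at hca
      obtain ⟨δ, hδ, hb⟩ := hca (sb - s₂ e₂) (by linarith)
      set τ := max 0 (e₂ - δ/2) with hτdef
      have hτ0 : 0 ≤ τ := le_max_left _ _
      have hτlt : τ < e₂ := by
        apply max_lt he
        linarith
      have hτd : dist τ e₂ < δ := by
        rw [Real.dist_eq, abs_lt]
        constructor
        · have : e₂ - δ/2 ≤ τ := le_max_right _ _
          linarith
        · linarith
      have := hb hτd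
      rw [Real.dist_eq, abs_lt] at this
      have h1 : s₂ τ < sb := by linarith [this.2]
      linarith [hgt₂ τ hτ0 hτlt]
  -- lower bounds for s on closed hitting intervals
  have hge₁ : ∀ τ, 0 ≤ τ → τ ≤ e₁ → (τ < e₁ ∨ 0 < τ) → sb ≤ s₁ τ := by
    intro τ hτ0 hτe hor
    rcases eq_or_lt_of_le hτe with h | h
    · rcases hor with h2 | h2
      · exact le_of_lt (hgt₁ τ hτ0 h2)
      · rw [h]; rw [heq₁ (by linarith)]
    · exact le_of_lt (hgt₁ τ hτ0 h)
  have hge₂ : ∀ τ, 0 ≤ τ → τ ≤ e₂ → (τ < e₂ ∨ 0 < τ) → sb ≤ s₂ τ := by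
    intro τ hτ0 hτe hor
    rcases eq_or_lt_of_le hτe with h | h
    · rcases hor with h2 | h2
      · exact le_of_lt (hgt₂ τ hτ0 h2)
      · rw [h]; rw [heq₂ (by linarith)]
    · exact le_of_lt (hgt₂ τ hτ0 h)
  -- single-coordinate monotone estimate for s₂
  have mono2 : ∀ lo hi : ℝ, 0 ≤ lo → lo < hi → hi ≤ e₂ →
      (1-r) * G (s₂ lo) + lo ≤ (1-r) * G (s₂ hi) + hi := by
    intro lo hi hlo hlohi hhie
    have hmem : ∀ τ ∈ Set.Icc lo hi, sb ≤ s₂ τ := by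
      intro τ hτ
      apply hge₂ τ (le_trans hlo hτ.1) (le_trans hτ.2 hhie)
      rcases lt_or_eq_of_le hτ.2 with h | h
      · left; exact lt_of_lt_of_le h hhie
      · right; rw [h]; linarith
    have hderivf : ∀ τ ∈ Set.Icc lo hi, HasDerivAt (fun τ => (1-r) * G (s₂ τ) + τ)
        ((1-r) * (1 / γ (s₂ τ) * (-((1 - a τ) / (1 - r)) * (μ (sst τ) * (s₂ τ - sst τ)))) + 1) τ := by
      intro τ hτ
      have hsp : 0 < s₂ τ := lt_of_lt_of_le hsb (hmem τ hτ)
      have h1 : HasDerivAt (fun τ => G (s₂ τ))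
          (1 / γ (s₂ τ) * (-((1 - a τ) / (1 - r)) * (μ (sst τ) * (s₂ τ - sst τ)))) τ :=
        (hGd hsp).comp τ (hd₂ τ)
      exact (h1.const_mul (1-r)).add (hasDerivAt_id τ)
    have hnn : ∀ τ ∈ Set.Ioo lo hi,
        0 ≤ (1-r) * (1 / γ (s₂ τ) * (-((1 - a τ) / (1 - r)) * (μ (sst τ) * (s₂ τ - sst τ)))) + 1 := by
      intro τ hτ
      have hs2τ : sb ≤ s₂ τ := hmem τ (Set.Ioo_subset_Icc_self hτ)
      have hγp : 0 < γ (s₂ τ) := hpos _ (by linarith)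
      have hqτ : μ (sst τ) * (s₂ τ - sst τ) / γ (s₂ τ) ≤ 1 := hq τ _ hs2τ
      have haτ := ha τ
      have hrw : (1-r) * (1 / γ (s₂ τ) * (-((1 - a τ) / (1 - r)) * (μ (sst τ) * (s₂ τ - sst τ)))) + 1
          = 1 - (1 - a τ) * (μ (sst τ) * (s₂ τ - sst τ) / γ (s₂ τ)) := by
        field_simp
        ring
      rw [hrw]
      rcases le_or_gt (μ (sst τ) * (s₂ τ - sst τ) / γ (s₂ τ)) 0 with h | h
      · nlinarith [haτ.1, haτ.2]
      · nlinarith [haτ.1, haτ.2]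
    have hmonoOn : MonotoneOn (fun τ => (1-r) * G (s₂ τ) + τ) (Set.Icc lo hi) := by
      apply monotoneOn_of_deriv_nonneg (convex_Icc lo hi)
      · intro τ hτ
        exact (hderivf τ hτ).continuousAt.continuousWithinAt
      · intro τ hτ
        rw [interior_Icc] at hτ
        exact ((hderivf τ (Set.Ioo_subset_Icc_self hτ)).differentiableAt).differentiableWithinAt
      · intro τ hτ
        rw [interior_Icc] at hτ
        rw [(hderivf τ (Set.Ioo_subset_Icc_self hτ)).deriv]
        exact hnn τ hτ
    exact hmonoOn ⟨le_rfl, hlohi.le⟩ ⟨hlohi.le, le_rfl⟩ hlohi.le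
  -- single-coordinate monotone estimate for s₁
  have mono1 : ∀ lo hi : ℝ, 0 ≤ lo → lo < hi → hi ≤ e₁ →
      r * G (s₁ lo) + lo ≤ r * G (s₁ hi) + hi := by
    intro lo hi hlo hlohi hhie
    have hmem : ∀ τ ∈ Set.Icc lo hi, sb ≤ s₁ τ := by
      intro τ hτ
      apply hge₁ τ (le_trans hlo hτ.1) (le_trans hτ.2 hhie)
      rcases lt_or_eq_of_le hτ.2 with h | h
      · left; exact lt_of_lt_of_le h hhie
      · right; rw [h]; linarith
    have hderivf : ∀ τ ∈ Set.Icc lo hi, HasDerivAt (fun τ => r * G (s₁ τ) + τ)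
        (r * (1 / γ (s₁ τ) * (-(a τ / r) * (μ (sst τ) * (s₁ τ - sst τ)))) + 1) τ := by
      intro τ hτ
      have hsp : 0 < s₁ τ := lt_of_lt_of_le hsb (hmem τ hτ)
      have h1 : HasDerivAt (fun τ => G (s₁ τ))
          (1 / γ (s₁ τ) * (-(a τ / r) * (μ (sst τ) * (s₁ τ - sst τ)))) τ :=
        (hGd hsp).comp τ (hd₁ τ)
      exact (h1.const_mul r).add (hasDerivAt_id τ)
    have hnn : ∀ τ ∈ Set.Ioo lo hi,
        0 ≤ r * (1 / γ (s₁ τ) * (-(a τ / r) * (μ (sst τ) * (s₁ τ - sst τ)))) + 1 := by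
      intro τ hτ
      have hs1τ : sb ≤ s₁ τ := hmem τ (Set.Ioo_subset_Icc_self hτ)
      have hγp : 0 < γ (s₁ τ) := hpos _ (by linarith)
      have hqτ : μ (sst τ) * (s₁ τ - sst τ) / γ (s₁ τ) ≤ 1 := hq τ _ hs1τ
      have haτ := ha τ
      have hrw : r * (1 / γ (s₁ τ) * (-(a τ / r) * (μ (sst τ) * (s₁ τ - sst τ)))) + 1
          = 1 - a τ * (μ (sst τ) * (s₁ τ - sst τ) / γ (s₁ τ)) := by
        field_simp
        ring
      rw [hrw]
      rcases le_or_gt (μ (sst τ) * (s₁ τ - sst τ) / γ (s₁ τ)) 0 with h | h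
      · nlinarith [haτ.1, haτ.2]
      · nlinarith [haτ.1, haτ.2]
    have hmonoOn : MonotoneOn (fun τ => r * G (s₁ τ) + τ) (Set.Icc lo hi) := by
      apply monotoneOn_of_deriv_nonneg (convex_Icc lo hi)
      · intro τ hτ
        exact (hderivf τ hτ).continuousAt.continuousWithinAt
      · intro τ hτ
        rw [interior_Icc] at hτ
        exact ((hderivf τ (Set.Ioo_subset_Icc_self hτ)).differentiableAt).differentiableWithinAt
      · intro τ hτ
        rw [interior_Icc] at hτ
        rw [(hderivf τ (Set.Ioo_subset_Icc_self hτ)).deriv]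
        exact hnn τ hτ
    exact hmonoOn ⟨le_rfl, hlohi.le⟩ ⟨hlohi.le, le_rfl⟩ hlohi.le
  -- joint monotone estimate
  have monoJ : ∀ hi : ℝ, 0 < hi → hi ≤ e₁ → hi ≤ e₂ →
      r * G (s₁ 0) + ((1-r) * G (s₂ 0) + 0) ≤ r * G (s₁ hi) + ((1-r) * G (s₂ hi) + hi) := by
    intro hi hhi hh1 hh2
    have hmem : ∀ τ ∈ Set.Icc (0:ℝ) hi, sb ≤ s₁ τ ∧ sb ≤ s₂ τ := by
      intro τ hτ
      constructor
      · apply hge₁ τ hτ.1 (le_trans hτ.2 hh1)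
        rcases lt_or_eq_of_le hτ.2 with h | h
        · left; exact lt_of_lt_of_le h hh1
        · right; rw [h]; exact hhi
      · apply hge₂ τ hτ.1 (le_trans hτ.2 hh2)
        rcases lt_or_eq_of_le hτ.2 with h | h
        · left; exact lt_of_lt_of_le h hh2
        · right; rw [h]; exact hhi
    have hderivf : ∀ τ ∈ Set.Icc (0:ℝ) hi, HasDerivAt
        (fun τ => r * G (s₁ τ) + ((1-r) * G (s₂ τ) + τ))
        (r * (1 / γ (s₁ τ) * (-(a τ / r) * (μ (sst τ) * (s₁ τ - sst τ)))) +
          ((1-r) * (1 / γ (s₂ τ) * (-((1 - a τ) / (1 - r)) * (μ (sst τ) * (s₂ τ - sst τ)))) + 1)) τ := by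
      intro τ hτ
      have hsp1 : 0 < s₁ τ := lt_of_lt_of_le hsb (hmem τ hτ).1
      have hsp2 : 0 < s₂ τ := lt_of_lt_of_le hsb (hmem τ hτ).2
      have h1 : HasDerivAt (fun τ => G (s₁ τ))
          (1 / γ (s₁ τ) * (-(a τ / r) * (μ (sst τ) * (s₁ τ - sst τ)))) τ :=
        (hGd hsp1).comp τ (hd₁ τ)
      have h2 : HasDerivAt (fun τ => G (s₂ τ))
          (1 / γ (s₂ τ) * (-((1 - a τ) / (1 - r)) * (μ (sst τ) * (s₂ τ - sst τ)))) τ :=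
        (hGd hsp2).comp τ (hd₂ τ)
      exact (h1.const_mul r).add ((h2.const_mul (1-r)).add (hasDerivAt_id τ))
    have hnn : ∀ τ ∈ Set.Ioo (0:ℝ) hi,
        0 ≤ r * (1 / γ (s₁ τ) * (-(a τ / r) * (μ (sst τ) * (s₁ τ - sst τ)))) +
          ((1-r) * (1 / γ (s₂ τ) * (-((1 - a τ) / (1 - r)) * (μ (sst τ) * (s₂ τ - sst τ)))) + 1) := by
      intro τ hτ
      have hs1τ : sb ≤ s₁ τ := (hmem τ (Set.Ioo_subset_Icc_self hτ)).1
      have hs2τ : sb ≤ s₂ τ := (hmem τ (Set.Ioo_subset_Icc_self hτ)).2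
      have hγp1 : 0 < γ (s₁ τ) := hpos _ (by linarith)
      have hγp2 : 0 < γ (s₂ τ) := hpos _ (by linarith)
      have hq1 : μ (sst τ) * (s₁ τ - sst τ) / γ (s₁ τ) ≤ 1 := hq τ _ hs1τ
      have hq2 : μ (sst τ) * (s₂ τ - sst τ) / γ (s₂ τ) ≤ 1 := hq τ _ hs2τ
      have haτ := ha τ
      have hrw : r * (1 / γ (s₁ τ) * (-(a τ / r) * (μ (sst τ) * (s₁ τ - sst τ)))) +
          ((1-r) * (1 / γ (s₂ τ) * (-((1 - a τ) / (1 - r)) * (μ (sst τ) * (s₂ τ - sst τ)))) + 1)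
          = 1 - a τ * (μ (sst τ) * (s₁ τ - sst τ) / γ (s₁ τ))
              - (1 - a τ) * (μ (sst τ) * (s₂ τ - sst τ) / γ (s₂ τ)) := by
        field_simp
        ring
      rw [hrw]
      rcases le_or_gt (μ (sst τ) * (s₁ τ - sst τ) / γ (s₁ τ)) 0 with h1 | h1 <;>
        rcases le_or_gt (μ (sst τ) * (s₂ τ -sst τ) / γ (s₂ τ)) 0 with h2 | h2 <;>
        nlinarith [haτ.1, haτ.2]
    have hmonoOn : MonotoneOn (fun τ => r * G (s₁ τ) + ((1-r) * G (s₂ τ) + τ)) (Set.Icc (0:ℝ) hi) := by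
      apply monotoneOn_of_deriv_nonneg (convex_Icc (0:ℝ) hi)
      · intro τ hτ
        exact (hderivf τ hτ).continuousAt.continuousWithinAt
      · intro τ hτ
        rw [interior_Icc] at hτ
        exact ((hderivf τ (Set.Ioo_subset_Icc_self hτ)).differentiableAt).differentiableWithinAt
      · intro τ hτ
        rw [interior_Icc] at hτ
        rw [(hderivf τ (Set.Ioo_subset_Icc_self hτ)).deriv]
        exact hnn τ hτ
    exact hmonoOn ⟨le_rfl, hhi.le⟩ ⟨hhi.le, le_rfl⟩ hhi.le
  -- final combination
  have hGsb : G sb = 0 := intervalIntegral.integral_same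
  have hMlow : ∀ x : ℝ, 0 ≤ x → x ≤ sb → max 0 (G x) = 0 :=
    fun x h1 h2 => max_eq_left (G_nonpos hpos h1 h2)
  have hMhigh : ∀ x : ℝ, sb ≤ x → max 0 (G x) = G x :=
    fun x h1 => max_eq_right (G_nonneg hpos hsb h1)
  rcases le_or_gt x₁ sb with hx1c | hx1c <;> rcases le_or_gt x₂ sb with hx2c | hx2c
  · rw [hMlow x₁ hx₁ hx1c, hMlow x₂ hx₂ hx2c]
    simpa using ht0
  · -- x₁ ≤ sb < x₂
    rw [hMlow x₁ hx₁ hx1c, hMhigh x₂ hx2c.le]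
    have he₂pos : 0 < e₂ := by
      rcases eq_or_lt_of_le he₂0 with h | h
      · exfalso
        have : s₂ e₂ ≤ sb := he₂mem.2
        rw [← h, hs₂0] at this
        linarith
      · exact h
    have := mono2 0 e₂ le_rfl he₂pos le_rfl
    rw [hs₂0, heq₂ he₂pos, hGsb] at this
    simp only [mul_zero] at this
    linarith
  · -- x₂ ≤ sb < x₁
    rw [hMlow x₂ hx₂ hx2c, hMhigh x₁ hx1c.le]
    have he₁pos : 0 < e₁ := by
      rcases eq_or_lt_of_le he₁0 with h | h
      · exfalso
        have : s₁ e₁ ≤ sb := he₁mem.2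
        rw [← h, hs₁0] at this
        linarith
      · exact h
    have := mono1 0 e₁ le_rfl he₁pos le_rfl
    rw [hs₁0, heq₁ he₁pos, hGsb] at this
    simp only [mul_zero] at this
    linarith
  · -- both above sb
    rw [hMhigh x₁ hx1c.le, hMhigh x₂ hx2c.le]
    have he₁pos : 0 < e₁ := by
      rcases eq_or_lt_of_le he₁0 with h | h
      · exfalso
        have : s₁ e₁ ≤ sb := he₁mem.2
        rw [← h, hs₁0] at this
        linarith
      · exact h
    have he₂pos : 0 < e₂ := by
      rcases eq_or_lt_of_le he₂0 with h | h
      · exfalso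
        have : s₂ e₂ ≤ sb := he₂mem.2
        rw [← h, hs₂0] at this
        linarith
      · exact h
    rcases le_total e₁ e₂ with hee | hee
    · have hJ := monoJ e₁ he₁pos le_rfl hee
      rw [hs₁0, hs₂0, heq₁ he₁pos, hGsb] at hJ
      simp only [mul_zero] at hJ
      have h2 : (1-r) * G (s₂ e₁) + e₁ ≤ (1-r) * G (s₂ e₂) + e₂ := by
        rcases eq_or_lt_of_le hee with h | h
        · rw [h]
        · exact mono2 e₁ e₂ he₁0 h le_rfl
      rw [heq₂ he₂pos, hGsb] at h2
      simp only [mul_zero] at h2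
      linarith
    · have hJ := monoJ e₂ he₂pos hee le_rfl
      rw [hs₁0, hs₂0, heq₂ he₂pos, hGsb] at hJ
      simp only [mul_zero] at hJ
      have h2 : r * G (s₁ e₂) + e₂ ≤ r * G (s₁ e₁) + e₁ := by
        rcases eq_or_lt_of_le hee with h | h
        · rw [h]
        · exact mono1 e₂ e₁ he₂0 h le_rfl
      rw [heq₁ he₁pos, hGsb] at h2
      simp only [mul_zero] at h2
      linarith


end S16

/-- For d = 0, the minimal-time function of the reduced problem equals
    V₀(x) = r T(x₁) + (1-r) T(x₂) with T(σ) = max(0, ∫_{s̲}^σ dξ/γ(ξ)). -/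
theorem stmt16 (μ γ : ℝ → ℝ) (r sb : ℝ)
    (hr : r ∈ Set.Ioo (0:ℝ) 1) (hsb : 0 < sb)
    (hC1 : ContDiff ℝ 1 μ) (hmono : StrictMonoOn μ (Set.Ici 0))
    (hconc : ConcaveOn ℝ (Set.Ici 0) μ) (h0 : μ 0 = 0)
    (hγ : ∀ σ > (0:ℝ), IsGreatest ((fun s : ℝ => μ s * (σ - s)) '' Set.Icc 0 σ) (γ σ))
    (T : ℝ → ℝ) (hT : ∀ σ, T σ = max 0 (∫ ξ in sb..σ, 1 / γ ξ)) :
    ∀ x₁ x₂ : ℝ, 0 ≤ x₁ → 0 ≤ x₂ →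
      sInf {t : ℝ | 0 ≤ t ∧ ∃ s₁ s₂ a sst : ℝ → ℝ,
        s₁ 0 = x₁ ∧ s₂ 0 = x₂ ∧
        (∀ τ, a τ ∈ Set.Icc (0:ℝ) 1) ∧
        (∀ τ, sst τ ∈ Set.Icc (0:ℝ) (a τ * s₁ τ + (1 - a τ) * s₂ τ)) ∧
        (∀ τ, HasDerivAt s₁ (-(a τ / r) * (μ (sst τ) * (s₁ τ - sst τ))) τ) ∧
        (∀ τ, HasDerivAt s₂ (-((1 - a τ) / (1 - r)) * (μ (sst τ) * (s₂ τ - sst τ))) τ) ∧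
        max (s₁ t) (s₂ t) ≤ sb}
      = r * T x₁ + (1 - r) * T x₂ := by
  intro x₁ x₂ hx₁ hx₂
  obtain ⟨hr0, hr1⟩ := hr
  have hr1' : 0 < 1 - r := by linarith
  have hμc : Continuous μ := hC1.continuous
  have hpos : ∀ σ > (0:ℝ), 0 < γ σ := fun σ hσ => S16.gamma_pos hmono h0 hγ hσ
  have hcont : ∀ σ > (0:ℝ), ContinuousAt γ σ := fun σ hσ => S16.gamma_contAt hmono h0 hγ hσ
  have hTnn : ∀ x, 0 ≤ T x := by intro x; rw [hT]; exact le_max_left _ _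
  have hThigh : ∀ x, sb < x → T x = ∫ ξ in sb..x, 1 / γ ξ := by
    intro x hx
    rw [hT]
    exact max_eq_right (S16.G_nonneg hpos hsb hx.le)
  set SS := {t : ℝ | 0 ≤ t ∧ ∃ s₁ s₂ a sst : ℝ → ℝ,
        s₁ 0 = x₁ ∧ s₂ 0 = x₂ ∧
        (∀ τ, a τ ∈ Set.Icc (0:ℝ) 1) ∧
        (∀ τ, sst τ ∈ Set.Icc (0:ℝ) (a τ * s₁ τ + (1 - a τ) * s₂ τ)) ∧
        (∀ τ, HasDerivAt s₁ (-(a τ / r) * (μ (sst τ) * (s₁ τ - sst τ))) τ) ∧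
        (∀ τ, HasDerivAt s₂ (-((1 - a τ) / (1 - r)) * (μ (sst τ) * (s₂ τ - sst τ))) τ) ∧
        max (s₁ t) (s₂ t) ≤ sb} with hSSdef
  -- lower bound
  have hlow : ∀ t ∈ SS, r * T x₁ + (1 - r) * T x₂ ≤ t := by
    intro t ht
    obtain ⟨ht0, s₁, s₂, a, sst, h1, h2, h3, h4, h5, h6, h7⟩ := ht
    rw [hT x₁, hT x₂]
    exact S16.lower hmono h0 hγ hsb ⟨hr0, hr1⟩ hx₁ hx₂ ht0 h1 h2 h3 h4 h5 h6 h7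
  -- single-coordinate construction
  have coord : ∀ ρ xb : ℝ, 0 < ρ → 0 ≤ xb → ∀ lam : ℝ, 0 < lam →
      ∃ S d : ℝ → ℝ, ∃ tA : ℝ,
        0 ≤ tA ∧ tA ≤ ρ * T xb + lam ∧
        (∀ τ, τ ≤ 0 → S τ = xb) ∧ (∀ τ, tA ≤ τ → S τ ≤ sb) ∧
        (∀ τ, HasDerivAt S (-(d τ / ρ)) τ) ∧
        (∀ τ, ∃ w, w ∈ Set.Icc 0 (S τ) ∧ μ w * (S τ - w) = d τ) ∧
        (∀ τ, τ ≤ 0 → d τ = 0) ∧ (∀ τ, tA ≤ τ → d τ = 0) := by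
    intro ρ xb hρ hxb lam hlam
    rcases le_or_gt xb sb with hcase | hcase
    · refine ⟨fun _ => xb, fun _ => 0, 0, le_rfl, ?_, fun _ _ => rfl, fun _ _ => hcase, ?_, ?_,
        fun _ _ => rfl, fun _ _ => rfl⟩
      · have := hTnn xb
        nlinarith
      · intro τ
        have : -((0:ℝ) / ρ) = 0 := by norm_num
        rw [this]
        exact hasDerivAt_const τ xb
      · intro τ
        exact ⟨0, ⟨le_rfl, hxb⟩, by rw [h0]; ring⟩
    · have hGpos : 0 < ∫ ξ in sb..xb, 1 / γ ξ :=
        S16.G_pos hpos hcont (fun ha hb => S16.inv_gamma_integrable hpos hcont ha hb) hsb hcase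
      set lam0 := min lam (ρ * ∫ ξ in sb..xb, 1 / γ ξ) with hlam0def
      have hlam0pos : 0 < lam0 := lt_min hlam (by positivity)
      have hlam0le : lam0 ≤ ρ * ∫ ξ in sb..xb, 1 / γ ξ := min_le_right _ _
      obtain ⟨S, d, tA, htAeq, hleft, hright, hrange, hderiv, hreal, hdl, hdr⟩ :=
        S16.build hμc hmono h0 hγ hsb hρ hcase hlam0pos hlam0le
      refine ⟨S, d, tA, ?_, ?_, hleft, fun τ hτ => le_of_eq (hright τ hτ), hderiv, hreal, hdl, hdr⟩
      · rw [htAeq]; positivity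
      · rw [htAeq, hThigh xb hcase]
        have : lam0 ≤ lam := min_le_left _ _
        linarith
  -- upper bound
  have hup : ∀ ε : ℝ, 0 < ε → ∃ t ∈ SS, t ≤ r * T x₁ + (1 - r) * T x₂ + ε := by
    intro ε hε
    obtain ⟨S₁, d₁, t₁, ht₁0, ht₁le, hS₁l, hS₁r, hder₁, hreal₁, hd₁l, hd₁r⟩ :=
      coord r x₁ hr0 hx₁ (ε/2) (by linarith)
    obtain ⟨S₂, d₂, t₂, ht₂0, ht₂le, hS₂l, hS₂r, hder₂, hreal₂, hd₂l, hd₂r⟩ :=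
      coord (1 - r) x₂ hr1' hx₂ (ε/2) (by linarith)
    choose w₁ hw₁ using hreal₁
    choose w₂ hw₂ using hreal₂
    refine ⟨t₁ + t₂, ⟨by linarith, S₁, fun τ => S₂ (τ - t₁),
      fun τ => if τ < t₁ then 1 else 0,
      fun τ => if τ < t₁ then w₁ τ else w₂ (τ - t₁),
      hS₁l 0 le_rfl, hS₂l _ (by linarith), ?_, ?_, ?_, ?_, ?_⟩, by linarith⟩
    · intro τ
      by_cases hc : τ < t₁ <;> simp only [if_pos, if_neg, hc, if_true, if_false] <;>
        constructor <;> norm_num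
    · intro τ
      by_cases hc : τ < t₁
      · simp only [if_pos hc]
        have h := (hw₁ τ).1
        have heq : (1:ℝ) * S₁ τ + (1 - 1) * S₂ (τ - t₁) = S₁ τ := by ring
        rw [heq]
        exact h
      · simp only [if_neg hc]
        have h := (hw₂ (τ - t₁)).1
        have heq : (0:ℝ) * S₁ τ + (1 - 0) * S₂ (τ - t₁) = S₂ (τ - t₁) := by ring
        rw [heq]
        exact h
    · intro τ
      by_cases hc : τ < t₁
      · simp only [if_pos hc]
        have hE : -((1:ℝ)/r) * (μ (w₁ τ) * (S₁ τ - w₁ τ)) = -(d₁ τ / r) := by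
          rw [(hw₁ τ).2]; ring
        rw [hE]
        exact hder₁ τ
      · simp only [if_neg hc]
        push_neg at hc
        have hz : d₁ τ = 0 := hd₁r τ hc
        have hE : -((0:ℝ)/r) * (μ (w₂ (τ - t₁)) * (S₁ τ - w₂ (τ - t₁))) = -(d₁ τ / r) := by
          rw [hz]; ring
        rw [hE]
        exact hder₁ τ
    · intro τ
      have hcomp : HasDerivAt (fun τ => S₂ (τ - t₁)) (-(d₂ (τ - t₁) / (1 - r)) * 1) τ :=
        (hder₂ (τ - t₁)).comp τ ((hasDerivAt_id τ).sub_const t₁)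
      by_cases hc : τ < t₁
      · simp only [if_pos hc]
        have hz : d₂ (τ - t₁) = 0 := hd₂l _ (by linarith)
        have hE : -((1 - (1:ℝ))/(1 - r)) * (μ (w₁ τ) * (S₂ (τ - t₁) - w₁ τ))
            = -(d₂ (τ - t₁) / (1 - r)) * 1 := by rw [hz]; ring
        rw [hE]
        exact hcomp
      · simp only [if_neg hc]
        have hE : -((1 - (0:ℝ))/(1 - r)) * (μ (w₂ (τ - t₁)) * (S₂ (τ - t₁) - w₂ (τ - t₁)))
            = -(d₂ (τ - t₁) / (1 - r)) * 1 := by rw [(hw₂ (τ - t₁)).2]; ring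
        rw [hE]
        exact hcomp
    · apply max_le
      · exact hS₁r (t₁ + t₂) (by linarith)
      · show S₂ (t₁ + t₂ - t₁) ≤ sb
        have : t₁ + t₂ - t₁ = t₂ := by ring
        rw [this]
        exact hS₂r t₂ le_rfl
  -- combine
  have hne : SS.Nonempty := by
    obtain ⟨t, ht, _⟩ := hup 1 one_pos
    exact ⟨t, ht⟩
  have hbdd : BddBelow SS := ⟨0, fun t ht => ht.1⟩
  apply le_antisymm
  · apply le_of_forall_pos_le_add
    intro ε hε
    obtain ⟨t, ht, hle⟩ := hup ε hε
    exact le_trans (csInf_le hbdd ht) hle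
  · exact le_csInf hne hlow
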